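/- arXiv:2511.11977 — 3 statements merged into one kernel-verified Lean document; each statement's English description precedes it below -/
import Mathlib

section
/- Define a(n) = 2^{Σ_{k ∈ bin(n)} k} and define recursively a_2(1) = 0, a_2(0) = 0, and for n = 2^R + m with 0 ≤ m < 2^R: a_2(n) = 2^R·a_2(m) + binom(2^{R-1}, 2)·a(m) if m < 2^{R-1}, and a_2(n) = 2^R·a_2(m) + (binom(2^{R-1}, 3) + 2^{R-1})·a(m)/2^{R-1} if 2^{R-1} ≤ m < 2^R. Then for any sparse even n, a_2(n) = (a(n)/8)·(n - 2ν(n)). -/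
/-- The set of positions of 1s in the binary expansion of `n`. -/
def binSet (n : ℕ) : Finset ℕ := (Finset.range (n + 1)).filter (fun i => n.testBit i)

/-- `a(n) = 2^{Σ_{k ∈ bin(n)} k}`, the number of odd-dimensional partitions of `n`. -/
def aOdd (n : ℕ) : ℕ := 2 ^ (∑ k ∈ binSet n, k)

/-- `n` is sparse if its binary expansion has no two consecutive 1s. -/
def Sparse (n : ℕ) : Prop := ∀ i, ¬(n.testBit i ∧ n.testBit (i + 1))

lemma choose_two_mul_two (x : ℕ) : Nat.choose x 2 * 2 = x * (x - 1) := by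
  rcases x with _ | y
  · simp
  · rw [Nat.choose_two_right, Nat.succ_sub_one]
    have h2 : 2 ∣ (y + 1) * y := by
      have := Nat.even_mul_succ_self y
      rw [mul_comm] at this
      exact this.two_dvd
    rw [Nat.div_mul_cancel h2]

lemma mem_binSet {n i : ℕ} : i ∈ binSet n ↔ n.testBit i := by
  simp only [binSet, Finset.mem_filter, Finset.mem_range]
  constructor
  · exact fun h => h.2
  · intro h
    refine ⟨?_, h⟩
    have := Nat.ge_two_pow_of_testBit h
    have := Nat.lt_two_pow_self (n := i)
    omega

lemma testBit_decomp {R m : ℕ} (hm : m < 2 ^ R) (i : ℕ) :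
    (2 ^ R + m).testBit i = if i = R then true else m.testBit i := by
  rcases lt_trichotomy i R with h | h | h
  · rw [Nat.testBit_two_pow_add_gt h]; simp [Nat.ne_of_lt h]
  · subst h
    rw [Nat.testBit_two_pow_add_eq, Nat.testBit_lt_two_pow hm]
    simp
  · have h1 : 2 ^ R + m < 2 ^ i := by
      calc 2 ^ R + m < 2 ^ R + 2 ^ R := by omega
      _ = 2 ^ (R + 1) := by ring
      _ ≤ 2 ^ i := Nat.pow_le_pow_right (by norm_num) h
    rw [Nat.testBit_lt_two_pow h1, Nat.testBit_lt_two_pow (lt_of_lt_of_le hm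
      (Nat.pow_le_pow_right (by norm_num) (le_of_lt h)))]
    simp [Nat.ne_of_gt h]

lemma binSet_decomp {R m : ℕ} (hm : m < 2 ^ R) :
    binSet (2 ^ R + m) = insert R (binSet m) := by
  ext i
  simp only [mem_binSet, Finset.mem_insert, testBit_decomp hm]
  rcases eq_or_ne i R with h | h <;> simp [h, mem_binSet]

lemma notmem_binSet {R m : ℕ} (hm : m < 2 ^ R) : R ∉ binSet m := by
  simp [mem_binSet, Nat.testBit_lt_two_pow hm]

lemma aOdd_decomp {R m : ℕ} (hm : m < 2 ^ R) :
    aOdd (2 ^ R + m) = 2 ^ R * aOdd m := by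
  rw [aOdd, aOdd, binSet_decomp hm, Finset.sum_insert (notmem_binSet hm), pow_add]

lemma card_decomp {R m : ℕ} (hm : m < 2 ^ R) :
    (binSet (2 ^ R + m)).card = (binSet m).card + 1 := by
  rw [binSet_decomp hm, Finset.card_insert_of_notMem (notmem_binSet hm)]

/-- If `a₂ : ℕ → ℕ` satisfies `a₂(0) = a₂(1) = 0` and the recursion of
Theorem 1.1, then for every sparse even `n` we have the closed form
`a₂(n) = (a(n)/8)·(n - 2ν(n))`, stated in the cleared-denominator form
`8·a₂(n) = a(n)·(n - 2ν(n))`. -/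
theorem stmt_9 (a₂ : ℕ → ℕ)
    (h0 : a₂ 0 = 0) (h1 : a₂ 1 = 0)
    (hrec1 : ∀ R m, 1 ≤ R → m < 2 ^ (R - 1) →
      a₂ (2 ^ R + m) = 2 ^ R * a₂ m + Nat.choose (2 ^ (R - 1)) 2 * aOdd m)
    (hrec2 : ∀ R m, 1 ≤ R → 2 ^ (R - 1) ≤ m → m < 2 ^ R →
      a₂ (2 ^ R + m) =
        2 ^ R * a₂ m + (Nat.choose (2 ^ (R - 1)) 3 + 2 ^ (R - 1)) * aOdd m / 2 ^ (R - 1))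
    (n : ℕ) (hs : Sparse n) (he : Even n) :
    8 * a₂ n = aOdd n * (n - 2 * (binSet n).card) := by
  clear hrec2 h1
  -- strengthen: also prove 2 * card ≤ n
  suffices H : ∀ n, Sparse n → Even n →
      8 * a₂ n = aOdd n * (n - 2 * (binSet n).card) ∧ 2 * (binSet n).card ≤ n from
    (H n hs he).1
  clear hs he n
  intro n
  induction n using Nat.strong_induction_on with
  | _ n IH =>
    intro hs he
    rcases Nat.eq_zero_or_pos n with h | hpos
    · subst h
      have : binSet 0 = ∅ := by ext i; simp [mem_binSet]
      simp [this, h0, aOdd]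
    -- decompose n = 2^R + m
    set R := Nat.log 2 n with hR
    have h2R : 2 ^ R ≤ n := Nat.pow_log_le_self 2 (by omega)
    have hlt : n < 2 ^ (R + 1) := Nat.lt_pow_succ_log_self (by norm_num) n
    set m := n - 2 ^ R with hmdef
    have hn : n = 2 ^ R + m := by omega
    have hm : m < 2 ^ R := by
      have : 2 ^ (R + 1) = 2 ^ R + 2 ^ R := by ring
      omega
    -- n is even so bit 0 is false, hence R ≥ 1
    have hbit0 : n.testBit 0 = false := by
      have := Nat.even_iff.mp he
      simp [Nat.testBit_zero, this]
    have hR1 : 1 ≤ R := by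
      by_contra h
      have hR0 : R = 0 := by omega
      rw [hR0] at h2R hlt
      have : n = 1 := by norm_num at h2R hlt; omega
      rw [this, Nat.even_iff] at he
      omega
    -- bit R of n is true, bit (R-1) is false by sparseness
    have hbitR : n.testBit R = true := by
      rw [hn, testBit_decomp hm]; simp
    have hbitR1 : n.testBit (R - 1) = false := by
      have := hs (R - 1)
      rw [show R - 1 + 1 = R by omega] at this
      simp [hbitR] at this
      simp [this]
    -- bits of m agree with bits of n below R
    have hmbit : ∀ i, i < R → m.testBit i = n.testBit i := by
      intro i hi
      rw [hn, testBit_decomp hm]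
      simp [Nat.ne_of_lt hi]
    have hmbit' : ∀ i, R ≤ i → m.testBit i = false := by
      intro i hi
      exact Nat.testBit_lt_two_pow (lt_of_lt_of_le hm (Nat.pow_le_pow_right (by norm_num) hi))
    -- m < 2^(R-1)
    have hmR1 : m.testBit (R - 1) = false := by
      rcases Nat.lt_or_ge (R - 1) R with h | h
      · rw [hmbit _ h]; exact hbitR1
      · exact hmbit' _ h
    have hm1 : m < 2 ^ (R - 1) := by
      by_contra h
      push_neg at h
      have h2 : m / 2 ^ (R - 1) = 1 := by
        have : 2 ^ R = 2 ^ (R - 1) * 2 := by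
          rw [← pow_succ]; congr 1; omega
        have hlt2 : m / 2 ^ (R - 1) < 2 := by
          apply Nat.div_lt_of_lt_mul; omega
        have hge : 1 ≤ m / 2 ^ (R - 1) := (Nat.one_le_div_iff (Nat.two_pow_pos _)).mpr h
        omega
      rw [Nat.testBit_eq_decide_div_mod_eq, h2] at hmR1
      simp at hmR1
    -- m is sparse and even
    have hms : Sparse m := by
      intro i ⟨ha, hb⟩
      rcases Nat.lt_or_ge (i + 1) R with h | h
      · exact hs i ⟨by rw [← hmbit i (by omega)]; exact ha, by rw [← hmbit _ h]; exact hb⟩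
      · rw [hmbit' _ h] at hb; exact Bool.false_ne_true hb
    have hme : Even m := by
      rw [Nat.even_iff]
      have h0 : m.testBit 0 = false := by rw [hmbit 0 (by omega)]; exact hbit0
      simpa [Nat.testBit_zero] using h0
    obtain ⟨ih1, ih2⟩ := IH m (by omega) hms hme
    -- apply the recursion
    rw [hn, hrec1 R m hR1 hm1, aOdd_decomp hm, card_decomp hm]
    set c := (binSet m).card
    set A := aOdd m
    set x := 2 ^ (R - 1) with hx
    have hxpos : 1 ≤ x := Nat.one_le_two_pow
    have h2x : 2 ^ R = 2 * x := by
      rw [hx, ← pow_succ']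
      congr 1; omega
    have hch : Nat.choose x 2 * 2 = x * (x - 1) := choose_two_mul_two x
    constructor
    · -- main identity
      have hsub : 2 ^ R + m - 2 * (c + 1) = 2 * (x - 1) + (m - 2 * c) := by omega
      rw [hsub]
      set d := m - 2 * c with hd
      set y := x - 1 with hy
      have hchoose : Nat.choose x 2 * 2 = x * y := hch
      -- 8 * a₂ m = A * d from ih1 (note m - 2*c = d)
      have ih1' : 8 * a₂ m = A * d := ih1
      calc 8 * (2 ^ R * a₂ m + Nat.choose x 2 * A)
          = 2 ^ R * (8 * a₂ m) + 4 * (Nat.choose x 2 * 2) * A := by ring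
        _ = 2 * x * (A * d) + 4 * (x * y) * A := by rw [ih1', hchoose, h2x]
        _ = 2 * x * A * (2 * y + d) := by ring
        _ = 2 ^ R * A * (2 * y + d) := by rw [h2x]
    · -- cardinality bound
      have : 2 ≤ 2 ^ R := by
        calc (2:ℕ) = 2 ^ 1 := rfl
        _ ≤ 2 ^ R := Nat.pow_le_pow_right (by norm_num) hR1
      omega
end

section
/- Suppose n has binary digits (b_i) and (z_i)_{i≥0} is a sequence of non-negative integers with z_0 = 0 satisfying w_i + z_i = b_i + 2z_{i+1} for all i ≥ 0, where (w_i) are non-negative integers with finite support and Σ w_i = Σ b_i + 1. Then there is exactly one index R > 0 with z_R = 1 and z_i = 0 for all other i; moreover for this R, b_R = 1, w_R = 0, w_{R-1} = b_{R-1} + 2, and w_i = b_i for all i ∉ {R-1, R}. -/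
/-- The `i`-th binary digit of `n`, as `0` or `1`. -/
def bit (n i : ℕ) : ℕ := if n.testBit i then 1 else 0

/-- Combinatorial core of Proposition 3.1: if `(w_i)`, `(z_i)` are finitely
supported sequences of non-negative integers with `z_0 = 0`,
`w_i + z_i = b_i + 2z_{i+1}` for all `i` (where `b_i` are the binary digits
of `n`), and `Σ w_i = Σ b_i + 1`, then there is a unique index `R > 0` with
`z_R = 1` and `z_i = 0` otherwise; moreover `b_R = 1`, `w_R = 0`,
`w_{R-1} = b_{R-1} + 2`, and `w_i = b_i` for all `i ∉ {R-1, R}`. -/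
theorem stmt_14 (n : ℕ) (w z : ℕ → ℕ)
    (hw : (Function.support w).Finite) (hz : (Function.support z).Finite)
    (hz0 : z 0 = 0)
    (hrec : ∀ i, w i + z i = bit n i + 2 * z (i + 1))
    (hsum : ∑ᶠ i, w i = (∑ᶠ i, bit n i) + 1) :
    ∃ R, 0 < R ∧ z R = 1 ∧ (∀ i, i ≠ R → z i = 0) ∧
      bit n R = 1 ∧ w R = 0 ∧ w (R - 1) = bit n (R - 1) + 2 ∧
      ∀ i, i ≠ R → i ≠ R - 1 → w i = bit n i := by
  classical
  have hbit_le : ∀ i, bit n i ≤ 1 := by intro i; unfold bit; split <;> omega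
  obtain ⟨N, hN⟩ : ∃ N, ∀ i, N ≤ i → w i = 0 ∧ z i = 0 ∧ bit n i = 0 := by
    refine ⟨(hw.toFinset ∪ hz.toFinset).sup id + n + 1, fun i hi => ?_⟩
    have h1 : w i = 0 := by
      by_contra h
      have hm : i ∈ hw.toFinset := by
        simp [Set.Finite.mem_toFinset, Function.mem_support, h]
      have := Finset.le_sup (f := id) (Finset.mem_union_left hz.toFinset hm)
      simp only [id] at this; omega
    have h2 : z i = 0 := by
      by_contra h
      have hm : i ∈ hz.toFinset := by
        simp [Set.Finite.mem_toFinset, Function.mem_support, h]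
      have := Finset.le_sup (f := id) (Finset.mem_union_right hw.toFinset hm)
      simp only [id] at this; omega
    have h3 : bit n i = 0 := by
      have hlt : n < 2 ^ i :=
        lt_of_lt_of_le (@Nat.lt_two_pow_self n) (Nat.pow_le_pow_right (by norm_num) (by omega))
      simp [bit, Nat.testBit_lt_two_pow hlt]
    exact ⟨h1, h2, h3⟩
  -- rewrite finsums as finset sums over range N
  have hsubw : Function.support w ⊆ ↑(Finset.range N) := by
    intro i hi
    simp only [Finset.coe_range, Set.mem_Iio]
    by_contra h
    exact hi ((hN i (by omega)).1)
  have hsubz : Function.support z ⊆ ↑(Finset.range N) := by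
    intro i hi
    simp only [Finset.coe_range, Set.mem_Iio]
    by_contra h
    exact hi ((hN i (by omega)).2.1)
  have hsubb : Function.support (bit n) ⊆ ↑(Finset.range N) := by
    intro i hi
    simp only [Finset.coe_range, Set.mem_Iio]
    by_contra h
    exact hi ((hN i (by omega)).2.2)
  rw [finsum_eq_finset_sum_of_support_subset w hsubw,
      finsum_eq_finset_sum_of_support_subset (bit n) hsubb] at hsum
  have key : ∑ i ∈ Finset.range N, (w i + z i)
      = ∑ i ∈ Finset.range N, (bit n i + 2 * z (i + 1)) :=
    Finset.sum_congr rfl fun i _ => hrec i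
  rw [Finset.sum_add_distrib, Finset.sum_add_distrib, ← Finset.mul_sum] at key
  have hshift : ∑ i ∈ Finset.range N, z (i + 1) = ∑ i ∈ Finset.range N, z i := by
    have h1 := Finset.sum_range_succ' z N
    have h2 := Finset.sum_range_succ z N
    have hzN : z N = 0 := (hN N le_rfl).2.1
    omega
  rw [hshift] at key
  have hSz : ∑ i ∈ Finset.range N, z i = 1 := by omega
  obtain ⟨R, hRmem, hzRne⟩ : ∃ R ∈ Finset.range N, z R ≠ 0 := by
    by_contra h
    push_neg at h
    rw [Finset.sum_eq_zero h] at hSz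
    omega
  have hsplit := Finset.add_sum_erase _ z hRmem
  rw [hSz] at hsplit
  have hzR : z R = 1 := by
    have : ∑ i ∈ (Finset.range N).erase R, z i + z R = 1 := by omega
    omega
  have hrest : ∑ i ∈ (Finset.range N).erase R, z i = 0 := by omega
  have hzall : ∀ i, i ≠ R → z i = 0 := by
    intro i hi
    by_cases hiN : i < N
    · exact Finset.sum_eq_zero_iff.mp hrest i (Finset.mem_erase.mpr ⟨hi, Finset.mem_range.mpr hiN⟩)
    · exact (hN i (by omega)).2.1
  have hRpos : 0 < R := by
    rcases Nat.eq_zero_or_pos R with h | h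
    · rw [h, hz0] at hzR; omega
    · exact h
  have hbR : bit n R = 1 ∧ w R = 0 := by
    have h := hrec R
    rw [hzR, hzall (R + 1) (by omega)] at h
    have := hbit_le R
    omega
  have hwR1 : w (R - 1) = bit n (R - 1) + 2 := by
    have h := hrec (R - 1)
    rw [hzall (R - 1) (by omega), Nat.sub_add_cancel hRpos, hzR] at h
    omega
  refine ⟨R, hRpos, hzR, hzall, hbR.1, hbR.2, hwR1, fun i hi hi' => ?_⟩
  have h := hrec i
  rw [hzall i hi, hzall (i + 1) (by omega)] at h
  omega
end

section
/- Suppose n has binary digits (b_i), and (w_i), (z_i) are sequences of non-negative integers with finite support, z_0 = 0, satisfying w_i + z_i = b_i + 2z_{i+1} for all i ≥ 0. If Σ w_i = Σ b_i, then w_i = b_i and z_i = 0 for all i. -/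
/-- Combinatorial core of Macdonald's characterization of odd partitions:
if `(w_i)`, `(z_i)` are finitely supported sequences of non-negative
integers with `z_0 = 0` and `w_i + z_i = b_i + 2z_{i+1}` for all `i`
(`b_i` the binary digits of `n`), and `Σ w_i = Σ b_i`, then `w_i = b_i`
and `z_i = 0` for all `i`. -/
theorem stmt_15 (n : ℕ) (w z : ℕ → ℕ)
    (hw : (Function.support w).Finite) (hz : (Function.support z).Finite)
    (hz0 : z 0 = 0)
    (hrec : ∀ i, w i + z i = bit n i + 2 * z (i + 1))
    (hsum : ∑ᶠ i, w i = ∑ᶠ i, bit n i) :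
    ∀ i, w i = bit n i ∧ z i = 0 := by
  obtain ⟨Nw, hNw⟩ := hw.bddAbove
  obtain ⟨Nz, hNz⟩ := hz.bddAbove
  set N := max (max Nw Nz) n + 1 with hN
  have hwN : ∀ i, N ≤ i → w i = 0 := by
    intro i hi
    by_contra h
    have := hNw h
    omega
  have hzN : ∀ i, N ≤ i → z i = 0 := by
    intro i hi
    by_contra h
    have := hNz h
    omega
  have hbN : ∀ i, N ≤ i → bit n i = 0 := by
    intro i hi
    have : n < 2 ^ i := lt_of_lt_of_le (@Nat.lt_two_pow_self n) (Nat.pow_le_pow_right (by norm_num) (by omega))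
    simp [bit, Nat.testBit_eq_false_of_lt this]
  have hws : Function.support w ⊆ ↑(Finset.range N) := by
    intro i hi
    simp only [Finset.coe_range, Set.mem_Iio]
    by_contra h
    exact hi (hwN i (by omega))
  have hbs : Function.support (bit n) ⊆ ↑(Finset.range N) := by
    intro i hi
    simp only [Finset.coe_range, Set.mem_Iio]
    by_contra h
    exact hi (hbN i (by omega))
  have hwe : ∑ᶠ i, w i = ∑ i ∈ Finset.range N, w i :=
    finsum_eq_finset_sum_of_support_subset w hws
  have hbe : ∑ᶠ i, bit n i = ∑ i ∈ Finset.range N, bit n i :=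
    finsum_eq_finset_sum_of_support_subset (bit n) hbs
  have hS : ∑ i ∈ Finset.range N, (w i + z i)
      = ∑ i ∈ Finset.range N, (bit n i + 2 * z (i + 1)) :=
    Finset.sum_congr rfl fun i _ => hrec i
  have hshift : ∑ i ∈ Finset.range N, z (i + 1) = ∑ i ∈ Finset.range N, z i := by
    have h1 : ∑ i ∈ Finset.range (N + 1), z i
        = (∑ i ∈ Finset.range N, z (i + 1)) + z 0 := Finset.sum_range_succ' z N
    have h2 : ∑ i ∈ Finset.range (N + 1), z i
        = (∑ i ∈ Finset.range N, z i) + z N := Finset.sum_range_succ z N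
    have h3 : z N = 0 := hzN N le_rfl
    omega
  rw [Finset.sum_add_distrib, Finset.sum_add_distrib, ← Finset.mul_sum, hshift] at hS
  have hzsum : ∑ i ∈ Finset.range N, z i = 0 := by
    rw [hwe, hbe] at hsum
    omega
  have hz_all : ∀ i, z i = 0 := by
    intro i
    by_cases hi : i < N
    · exact Finset.sum_eq_zero_iff.mp hzsum i (Finset.mem_range.mpr hi)
    · exact hzN i (by omega)
  intro i
  have := hrec i
  rw [hz_all i, hz_all (i + 1)] at this
  exact ⟨by omega, hz_all i⟩
end
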